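/- For the symmetrization map π_n : ℂ^n → ℂ^n whose j-th coordinate is the j-th elementary symmetric polynomial, and for any domain D ⊆ ℂ, the image S_n(D) := π_n(D^n) is open and connected in ℂ^n. -/

import Mathlib

/-- The symmetrization map `π_n : ℂ^n → ℂ^n`, whose `j`-th coordinate is the
`(j+1)`-st elementary symmetric polynomial of the entries. -/
noncomputable def symPoly (n : ℕ) (lam : Fin n → ℂ) : Fin n → ℂ :=
  fun j => ∑ t ∈ Finset.powersetCard ((j : ℕ) + 1) Finset.univ, ∏ i ∈ t, lam i

/-- The `n`-fold symmetric product `S_n(D) = π_n(D^n)` of a planar set `D`. -/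
noncomputable def symProd (n : ℕ) (D : Set ℂ) : Set (Fin n → ℂ) :=
  symPoly n '' {lam | ∀ i, lam i ∈ D}

section SymProdAux

open Polynomial Multiset

noncomputable def symM (n : ℕ) (lam : Fin n → ℂ) : Multiset ℂ :=
  Finset.univ.val.map lam
lemma symM_card (n : ℕ) (lam : Fin n → ℂ) : Multiset.card (symM n lam) = n := by
  simp [symM]
lemma symPoly_eq_esymm (n : ℕ) (lam : Fin n → ℂ) (j : Fin n) :
    symPoly n lam j = (symM n lam).esymm ((j : ℕ) + 1) := by
  rw [symM, Finset.esymm_map_val]; rfl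
noncomputable def symQ (n : ℕ) (lam : Fin n → ℂ) : ℂ[X] :=
  ((symM n lam).map fun a => X - C a).prod
lemma symQ_monic (n : ℕ) (lam : Fin n → ℂ) : (symQ n lam).Monic :=
  monic_multiset_prod_of_monic _ _ fun a _ => monic_X_sub_C a
lemma symQ_natDegree (n : ℕ) (lam : Fin n → ℂ) : (symQ n lam).natDegree = n := by
  rw [symQ, natDegree_multiset_prod_X_sub_C_eq_card, symM_card]
lemma symQ_roots (n : ℕ) (lam : Fin n → ℂ) : (symQ n lam).roots = symM n lam :=
  roots_multiset_prod_X_sub_C _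
lemma symQ_coeff (n : ℕ) (lam : Fin n → ℂ) {k : ℕ} (hk : k ≤ n) :
    (symQ n lam).coeff k = (-1) ^ (n - k) * (symM n lam).esymm (n - k) := by
  have := Multiset.prod_X_sub_C_coeff (symM n lam) (k := k) (by rwa [symM_card])
  rwa [symM_card] at this

lemma symM_eq_of_symPoly_eq {n : ℕ} {lam mu : Fin n → ℂ}
    (h : symPoly n lam = symPoly n mu) : symM n lam = symM n mu := by
  have hesymm : ∀ k ≤ n, (symM n lam).esymm k = (symM n mu).esymm k := by
    intro k hk
    rcases Nat.eq_zero_or_pos k with rfl | hk0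
    · simp [Multiset.esymm]
    · have hj : k - 1 < n := by omega
      have := congrFun h ⟨k - 1, hj⟩
      rw [symPoly_eq_esymm, symPoly_eq_esymm] at this
      simpa [Nat.sub_add_cancel hk0] using this
  have hQ : symQ n lam = symQ n mu := by
    ext k
    rcases le_or_gt k n with hk | hk
    · rw [symQ_coeff n lam hk, symQ_coeff n mu hk, hesymm _ (Nat.sub_le _ _)]
    · rw [coeff_eq_zero_of_natDegree_lt (by rwa [symQ_natDegree]),
        coeff_eq_zero_of_natDegree_lt (by rwa [symQ_natDegree])]
  rw [← symQ_roots, ← symQ_roots, hQ]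

lemma symPoly_surjective (n : ℕ) (c : Fin n → ℂ) : ∃ lam : Fin n → ℂ, symPoly n lam = c := by
  rcases Nat.eq_zero_or_pos n with rfl | hn
  · exact ⟨Fin.elim0, funext fun j => j.elim0⟩
  set q : ℂ[X] := X ^ n + ∑ j : Fin n, C ((-1) ^ ((j : ℕ) + 1) * c j) * X ^ (n - 1 - (j : ℕ))
    with hq_def
  have hdeg_sum : (∑ j : Fin n, C ((-1) ^ ((j : ℕ) + 1) * c j) * X ^ (n - 1 - (j : ℕ))).degree
      < (n : WithBot ℕ) := by
    refine lt_of_le_of_lt (Polynomial.degree_sum_le _ _) ?_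
    rw [Finset.sup_lt_iff (by exact_mod_cast WithBot.bot_lt_coe n)]
    intro j _
    refine lt_of_le_of_lt (degree_C_mul_X_pow_le _ _) ?_
    exact_mod_cast Nat.lt_of_le_of_lt (Nat.sub_le _ _) (by omega)
  have hq_monic : q.Monic := monic_X_pow_add hdeg_sum
  have hq_deg : q.natDegree = n := by
    have : q.degree = (n : WithBot ℕ) := by
      rw [hq_def, degree_add_eq_left_of_degree_lt (by rwa [degree_X_pow]), degree_X_pow]
    exact natDegree_eq_of_degree_eq_some this
  have hcard : Multiset.card q.roots = n := by
    rw [← hq_deg]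
    exact (splits_iff_card_roots.mp (IsAlgClosed.splits q))
  -- build lam from the roots
  set l := q.roots.toList with hl
  have hlen : l.length = n := by rw [hl, Multiset.length_toList, hcard]
  set lam : Fin n → ℂ := fun i => l.get (Fin.cast hlen.symm i) with hlam
  have hMl : symM n lam = q.roots := by
    rw [symM, Fin.univ_val_map, ← Multiset.coe_toList q.roots, ← hl]
    congr 1
    refine List.ext_get (by simp [hlen]) fun i h1 h2 => ?_
    simp [hlam]
  refine ⟨lam, funext fun j => ?_⟩
  have hj1 : (j : ℕ) + 1 ≤ n := j.2
  have hco := Polynomial.coeff_eq_esymm_roots_of_card (hcard.trans hq_deg.symm)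
    (k := n - ((j : ℕ) + 1)) (by rw [hq_deg]; omega)
  rw [hq_monic.leadingCoeff, one_mul, hq_deg] at hco
  have hnk : n - (n - ((j : ℕ) + 1)) = (j : ℕ) + 1 := by omega
  rw [hnk] at hco
  -- compute the coefficient directly
  have hco2 : q.coeff (n - ((j : ℕ) + 1)) = (-1) ^ ((j : ℕ) + 1) * c j := by
    rw [hq_def, coeff_add, coeff_X_pow, if_neg (by omega), finset_sum_coeff]
    rw [Finset.sum_eq_single j]
    · rw [show n - ((j : ℕ) + 1) = n - 1 - (j : ℕ) from by omega, coeff_C_mul, coeff_X_pow,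
        if_pos rfl, mul_one, zero_add]
    · intro b _ hbj
      rw [coeff_C_mul, coeff_X_pow, if_neg, mul_zero]
      have hb1 : (b : ℕ) + 1 ≤ n := b.2
      intro hEq
      exact hbj (Fin.ext (by omega))
    · intro h; exact absurd (Finset.mem_univ j) h
  have hne : ((-1 : ℂ)) ^ ((j : ℕ) + 1) ≠ 0 := pow_ne_zero _ (by norm_num)
  rw [symPoly_eq_esymm, hMl]
  exact (mul_left_cancel₀ hne (hco2.symm.trans hco)).symm

lemma symPoly_continuous (n : ℕ) : Continuous (symPoly n) :=
  continuous_pi fun _ =>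
    continuous_finset_sum _ fun _ _ => continuous_finset_prod _ fun i _ => continuous_apply i

lemma norm_le_of_symPoly_norm_le {n : ℕ} {B : ℝ} (hB : 0 ≤ B) {lam : Fin n → ℂ}
    (h : ∀ j, ‖symPoly n lam j‖ ≤ B) (i : Fin n) : ‖lam i‖ ≤ B + 1 := by
  set B' : NNReal := ⟨B, hB⟩ with hB'
  have hroot : (symQ n lam).IsRoot (lam i) := by
    rw [← mem_roots (symQ_monic n lam).ne_zero, symQ_roots]
    exact Multiset.mem_map.mpr ⟨i, by simp, rfl⟩
  have hlt := Polynomial.IsRoot.norm_lt_cauchyBound (symQ_monic n lam).ne_zero hroot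
  have hcb : cauchyBound (symQ n lam) ≤ B' + 1 := by
    rw [cauchyBound, Monic.leadingCoeff (symQ_monic n lam), nnnorm_one, div_one]
    refine add_le_add_left (Finset.sup_le fun k hk => ?_) 1
    rw [Finset.mem_range, symQ_natDegree] at hk
    rw [symQ_coeff n lam hk.le, nnnorm_mul, nnnorm_pow, nnnorm_neg, nnnorm_one, one_pow, one_mul]
    have he : (symM n lam).esymm (n - k) = symPoly n lam ⟨n - k - 1, by omega⟩ := by
      rw [symPoly_eq_esymm]
      congr 1
      show n - k = n - k - 1 + 1
      omega
    rw [he]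
    have := h ⟨n - k - 1, by omega⟩
    rwa [← NNReal.coe_le_coe, coe_nnnorm]
  have := (hlt.trans_le hcb).le
  rw [← NNReal.coe_le_coe, coe_nnnorm] at this
  exact this

lemma symPoly_isProperMap (n : ℕ) : IsProperMap (symPoly n) := by
  rw [isProperMap_iff_isCompact_preimage]
  refine ⟨symPoly_continuous n, fun K hK => ?_⟩
  obtain ⟨R, hR⟩ := (isBounded_iff_forall_norm_le).mp hK.isBounded
  set B : ℝ := max R 0 with hBdef
  refine (isCompact_closedBall (0 : Fin n → ℂ) (B + 1)).of_isClosed_subset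
    (hK.isClosed.preimage (symPoly_continuous n)) ?_
  intro lam hlam
  rw [Metric.mem_closedBall, dist_zero_right]
  refine (pi_norm_le_iff_of_nonneg (by positivity)).mpr fun i => ?_
  refine norm_le_of_symPoly_norm_le (le_max_right R 0) (fun j => ?_) i
  exact le_trans (norm_le_pi_norm _ j) (le_trans (hR _ hlam) (le_max_left R 0))



end SymProdAux

/-- For a domain `D ⊆ ℂ`, the symmetric product `S_n(D) = π_n(D^n)` is an open
and connected subset of `ℂ^n`. -/
theorem symProd_isOpen_isConnected (n : ℕ) (D : Set ℂ)
    (hDopen : IsOpen D) (hDconn : IsConnected D) :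
    IsOpen (symProd n D) ∧ IsConnected (symProd n D) := by
  have hpi : {lam : Fin n → ℂ | ∀ i, lam i ∈ D} = Set.pi Set.univ fun _ => D := by
    ext lam; simp [Set.mem_pi]
  constructor
  · have hclosedmap : IsClosedMap (symPoly n) := (symPoly_isProperMap n).isClosedMap
    have hcompl : (symProd n D)ᶜ = symPoly n '' {lam | ∀ i, lam i ∈ D}ᶜ := by
      ext c
      constructor
      · intro hc
        obtain ⟨mu, hmu⟩ := symPoly_surjective n c
        exact ⟨mu, fun hmem => hc ⟨mu, hmem, hmu⟩, hmu⟩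
      · rintro ⟨mu, hmu, rfl⟩ ⟨lam, hlam, heq⟩
        rw [Set.mem_compl_iff, Set.mem_setOf_eq] at hmu
        push_neg at hmu
        obtain ⟨i, hi⟩ := hmu
        have hmem : mu i ∈ symM n mu := Multiset.mem_map.mpr ⟨i, by simp, rfl⟩
        rw [← symM_eq_of_symPoly_eq heq] at hmem
        obtain ⟨k, -, hk⟩ := Multiset.mem_map.mp hmem
        exact hi (hk ▸ hlam k)
    have hopen : IsOpen {lam : Fin n → ℂ | ∀ i, lam i ∈ D} := by
      rw [hpi]
      exact isOpen_set_pi Set.finite_univ fun i _ => hDopen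
    exact isClosed_compl_iff.mp (hcompl ▸ hclosedmap _ hopen.isClosed_compl)
  · refine IsConnected.image ?_ _ (symPoly_continuous n).continuousOn
    rw [hpi]
    exact isConnected_univ_pi.mpr fun _ => hDconn
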